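/- If L is a linear forest on n vertices with exactly k connected components, then c₂(L) = n − k (equivalently, c₂(L) equals the number of edges of L). -/

import Mathlib

open Matrix

/-- A subgraph complementation system for `G`: a finite collection (multiset) of subsets of
vertices such that two distinct vertices are adjacent iff they lie together in an odd
number of the sets. -/
def IsSCS {V : Type*} [DecidableEq V] (G : SimpleGraph V) (𝒞 : Multiset (Finset V)) : Prop :=
  ∀ u v : V, u ≠ v →
    (G.Adj u v ↔ Odd (Multiset.card (𝒞.filter (fun C => u ∈ C ∧ v ∈ C))))

/-- The subgraph complementation number `c₂(G)`: the minimum cardinality of a subgraph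
complementation system for `G`. -/
noncomputable def c2 {V : Type*} [DecidableEq V] (G : SimpleGraph V) : ℕ :=
  sInf {k | ∃ 𝒞 : Multiset (Finset V), IsSCS G 𝒞 ∧ Multiset.card 𝒞 = k}

/-- A symmetric matrix over `F₂` fits `G` if its off-diagonal entries record adjacency. -/
def FitsF2 {V : Type*} (G : SimpleGraph V) (A : Matrix V V (ZMod 2)) : Prop :=
  A.IsSymm ∧ ∀ u v : V, u ≠ v → (A u v = 1 ↔ G.Adj u v)

/-- The minimum rank of `G` over `F₂`: the minimum rank of a symmetric matrix over `F₂`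
that fits `G`. -/
noncomputable def mrF2 {V : Type*} [Fintype V] (G : SimpleGraph V) : ℕ :=
  sInf {k | ∃ A : Matrix V V (ZMod 2), FitsF2 G A ∧ A.rank = k}

/-- A linear forest: an acyclic graph in which every vertex has degree at most 2,
i.e. every connected component is a path. -/
def IsLinearForest {V : Type*} (G : SimpleGraph V) : Prop :=
  G.IsAcyclic ∧ ∀ v : V, (G.neighborSet v).ncard ≤ 2

set_option linter.unusedSectionVars false
set_option maxHeartbeats 1000000

namespace SCSproof
open SimpleGraph

variable {V : Type*} [Fintype V] [DecidableEq V] {G : SimpleGraph V} {F : Type*} [Field F]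





lemma exists_leaf (hac : G.IsAcyclic) (v : V) :
    ∃ u, G.Reachable v u ∧ (G.neighborSet u).ncard ≤ 1 := by
  classical
  set T : Set ℕ := {ℓ | ∃ (u : V) (p : G.Walk v u), p.IsPath ∧ p.length = ℓ} with hT
  have hne : T.Nonempty := ⟨0, v, Walk.nil, by simp, rfl⟩
  have hbdd : BddAbove T := ⟨Fintype.card V, by rintro ℓ ⟨u, p, hp, rfl⟩; exact hp.length_lt.le⟩
  obtain ⟨u, p, hp, hl⟩ := Nat.sSup_mem hne hbdd
  have hmax : ∀ (w : V) (q : G.Walk v w), q.IsPath → q.length ≤ p.length := by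
    intro w q hq; rw [hl]; exact le_csSup hbdd ⟨w, q, hq, rfl⟩
  refine ⟨u, ⟨p⟩, ?_⟩
  have hsupp : ∀ c, G.Adj u c → c ∈ p.support := by
    intro c hc
    by_contra hcs
    have hq : (Walk.cons hc.symm p.reverse).reverse.IsPath := by
      rw [Walk.isPath_reverse_iff, Walk.cons_isPath_iff]
      exact ⟨hp.reverse, by rwa [Walk.support_reverse, List.mem_reverse]⟩
    have := hmax c _ hq
    simp [Walk.length_reverse, Walk.length_cons] at this
  rcases Nat.eq_zero_or_pos p.length with h0 | hpos
  · have huv : v = u := Walk.eq_of_length_eq_zero h0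
    subst huv
    have hnil : p = Walk.nil := (Walk.isPath_iff_eq_nil (p := p)).mp hp
    have hsub : G.neighborSet v ⊆ {v} := by
      intro c hc
      have := hsupp c hc
      rw [hnil, Walk.support_nil] at this
      simpa using this
    calc (G.neighborSet v).ncard ≤ ({v} : Set V).ncard :=
          Set.ncard_le_ncard hsub (Set.finite_singleton v)
      _ = 1 := Set.ncard_singleton v
  · have hvu : v ≠ u := by
      rintro rfl
      rw [(Walk.isPath_iff_eq_nil (p := p)).mp hp] at hpos
      simp at hpos
    obtain ⟨a, ha, q, hq⟩ := Walk.exists_eq_cons_of_ne hvu.symm p.reverse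
    have hsub : G.neighborSet u ⊆ {a} := by
      intro c (hc : G.Adj u c)
      simp only [Set.mem_singleton_iff]
      by_contra hca
      have hcmem : c ∈ p.reverse.support := by
        rw [Walk.support_reverse, List.mem_reverse]; exact hsupp c hc
      set t := p.reverse.takeUntil c hcmem with ht
      have htp : t.IsPath := hp.reverse.takeUntil hcmem
      have h2 : (Walk.cons hc Walk.nil : G.Walk u c).IsPath := by
        simp [Walk.cons_isPath_iff, hc.ne]
      have hEq : t = Walk.cons hc Walk.nil := by
        have := hac.path_unique ⟨t, htp⟩ ⟨Walk.cons hc Walk.nil, h2⟩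
        exact congrArg Subtype.val this
      have hspec := p.reverse.take_spec hcmem
      have h1 : p.reverse.getVert 1 = a := by
        rw [hq]; exact (Walk.getVert_cons_succ q ha).trans (Walk.getVert_zero q)
      have h2' : p.reverse.getVert 1 = c := by
        rw [← hspec, ← ht, hEq, Walk.cons_append]
        exact (Walk.getVert_cons_succ _ hc).trans (Walk.getVert_zero _)
      rw [h1] at h2'; exact hca h2'.symm
    calc (G.neighborSet u).ncard ≤ ({a} : Set V).ncard :=
          Set.ncard_le_ncard hsub (Set.finite_singleton a)
      _ = 1 := Set.ncard_singleton a

variable {e x u v : V} {d : ℕ}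

lemma dist_le_succ_of_adj (h : G.Adj u v) (hr : G.Reachable e u) :
    G.dist e v ≤ G.dist e u + 1 := by
  obtain ⟨p, hp⟩ := hr.exists_walk_length_eq_dist
  have := SimpleGraph.dist_le (p.append (Walk.cons h Walk.nil))
  rwa [Walk.length_append, Walk.length_cons, Walk.length_nil, hp] at this

lemma step_down (hd : G.dist e x = d + 1) (hr : G.Reachable e x) :
    ∃ w, G.Adj w x ∧ G.Reachable e w ∧ G.dist e w = d := by
  obtain ⟨p, hp⟩ := hr.exists_walk_length_eq_dist
  have hxe : x ≠ e := by
    rintro rfl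
    rw [SimpleGraph.dist_self] at hd
    · exact Nat.succ_ne_zero d hd.symm
  obtain ⟨w, haw, q, hq⟩ := Walk.exists_eq_cons_of_ne hxe p.reverse
  have hql : q.length = d := by
    have := congrArg Walk.length hq
    rw [Walk.length_reverse, hp, hd, Walk.length_cons] at this
    omega
  have hrew : G.Reachable e w := ⟨q.reverse⟩
  have h1 : G.dist e w ≤ d := by
    have := SimpleGraph.dist_le q.reverse
    rwa [Walk.length_reverse, hql] at this
  have h2 : d ≤ G.dist e w := by
    have := dist_le_succ_of_adj (haw.symm : G.Adj w x) hrew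
    omega
  exact ⟨w, haw.symm, hrew, le_antisymm h1 h2⟩

lemma unique_at_dist (hdeg : ∀ z : V, (G.neighborSet z).ncard ≤ 2)
    (he : (G.neighborSet e).ncard ≤ 1) :
    ∀ d (u v : V), G.Reachable e u → G.Reachable e v →
      G.dist e u = d → G.dist e v = d → u = v := by
  intro d
  induction d with
  | zero =>
    intro u v hu hv h1 h2
    have h1' : e = u := hu.dist_eq_zero_iff.mp h1
    have h2' : e = v := hv.dist_eq_zero_iff.mp h2
    rw [← h1', ← h2']
  | succ d ih =>
    intro u v hu hv h1 h2
    obtain ⟨w1, ha1, hr1, hd1⟩ := step_down h1 hu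
    obtain ⟨w2, ha2, hr2, hd2⟩ := step_down h2 hv
    obtain rfl : w1 = w2 := ih w1 w2 hr1 hr2 hd1 hd2
    by_contra huv
    rcases Nat.eq_zero_or_pos d with rfl | hdpos
    · have hwe : e = w1 := hr1.dist_eq_zero_iff.mp hd1
      subst hwe
      exact huv ((Set.ncard_le_one (Set.toFinite _)).mp he u ha1 v ha2)
    · obtain ⟨d', rfl⟩ : ∃ d', d = d' + 1 := ⟨d - 1, by omega⟩
      obtain ⟨w0, ha0, hr0, hd0⟩ := step_down hd1 hr1
      have hw0u : w0 ≠ u := by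
        rintro rfl
        have hru : G.Reachable e w0 := hr0
        rw [hd0] at h1; omega
      have hw0v : w0 ≠ v := by rintro rfl; rw [hd0] at h2; omega
      have hmem : ({w0, u, v} : Set V) ⊆ G.neighborSet w1 := by
        intro z hz
        rcases hz with rfl | rfl | rfl
        · exact ha0.symm
        · exact ha1
        · exact ha2
      have h3 : ({w0, u, v} : Set V).ncard = 3 := by
        rw [Set.ncard_insert_of_notMem (by simp [hw0u, hw0v]),
          Set.ncard_insert_of_notMem (by simp [huv]), Set.ncard_singleton]
      have h4 := Set.ncard_le_ncard hmem (Set.toFinite _)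
      have h5 := hdeg w1
      omega

lemma exists_at_dist :
    ∀ d (x : V), G.Reachable e x → G.dist e x = d → ∀ j ≤ d,
      ∃ y, G.Reachable e y ∧ G.dist e y = j := by
  intro d
  induction d with
  | zero =>
    intro x hx hd j hj
    obtain rfl : j = 0 := Nat.le_zero.mp hj
    exact ⟨e, Reachable.refl e, SimpleGraph.dist_self⟩
  | succ d ih =>
    intro x hx hd j hj
    rcases Nat.eq_or_lt_of_le hj with rfl | hlt
    · exact ⟨x, hx, hd⟩
    · obtain ⟨w, _, hrw, hdw⟩ := step_down hd hx
      exact ih w hrw hdw j (by omega)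

lemma dist_lt_card (hr : G.Reachable e x) : G.dist e x < Fintype.card V := by
  obtain ⟨p, hp⟩ := hr.exists_walk_length_eq_dist
  have h1 := SimpleGraph.dist_le p.bypass
  have h2 := Walk.length_bypass_le p
  have h3 := (Walk.bypass_isPath p).length_lt
  omega




theorem exists_pathFun (hac : G.IsAcyclic) (hdeg : ∀ z : V, (G.neighborSet z).ncard ≤ 2) :
    ∃ f : V → ℕ,
      (∀ u v, G.connectedComponentMk u = G.connectedComponentMk v → f u = f v → u = v) ∧
      (∀ u v, G.Adj u v → f u = f v + 1 ∨ f v = f u + 1) ∧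
      (∀ u x, G.connectedComponentMk x = G.connectedComponentMk u → f u < f x →
        ∃ w, G.Adj u w ∧ f w = f u + 1) ∧
      (∀ v, f v < Fintype.card V) := by
  classical
  have hep : ∀ c : G.ConnectedComponent, ∃ u, G.connectedComponentMk u = c ∧
      (G.neighborSet u).ncard ≤ 1 := by
    intro c
    obtain ⟨v, rfl⟩ := c.exists_rep
    obtain ⟨u, hru, hu⟩ := exists_leaf hac v
    exact ⟨u, (ConnectedComponent.sound hru.symm : _), hu⟩
  choose ep hep1 hep2 using hep
  set f : V → ℕ := fun v => G.dist (ep (G.connectedComponentMk v)) v with hf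
  have hreach : ∀ v : V, G.Reachable (ep (G.connectedComponentMk v)) v := by
    intro v
    exact (ConnectedComponent.eq.mp (hep1 (G.connectedComponentMk v)))
  refine ⟨f, ?_, ?_, ?_, ?_⟩
  · intro u v hcmp hfe
    have := unique_at_dist hdeg (hep2 (G.connectedComponentMk u)) (f u) u v
      (hreach u) (by rw [hcmp]; exact hreach v) rfl (by rw [hcmp]; exact hfe.symm)
    exact this
  · intro u v hadj
    have hcmp : G.connectedComponentMk u = G.connectedComponentMk v :=
      ConnectedComponent.sound hadj.reachable
    have hne : f u ≠ f v := by
      intro hfe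
      exact hadj.ne (unique_at_dist hdeg (hep2 _) (f u) u v (hreach u)
        (by rw [hcmp]; exact hreach v) rfl (by rw [hcmp]; exact hfe.symm))
    have h1 : f v ≤ f u + 1 := by
      have := dist_le_succ_of_adj hadj (hreach u)
      show G.dist (ep (G.connectedComponentMk v)) v ≤ G.dist (ep (G.connectedComponentMk u)) u + 1
      rw [hcmp] at this ⊢; exact this
    have h2 : f u ≤ f v + 1 := by
      have := dist_le_succ_of_adj hadj.symm (hreach v)
      show G.dist (ep (G.connectedComponentMk u)) u ≤ G.dist (ep (G.connectedComponentMk v)) v + 1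
      rw [← hcmp] at this ⊢; exact this
    omega
  · intro u x hcmp hlt
    set e := ep (G.connectedComponentMk u) with he
    have hrx : G.Reachable e x := by rw [he, ← hcmp]; exact hreach x
    have hfx : G.dist e x = f x := by
      show G.dist (ep (G.connectedComponentMk u)) x = G.dist (ep (G.connectedComponentMk x)) x
      rw [← hcmp]
    obtain ⟨y, hry, hdy⟩ := exists_at_dist (f x) x hrx hfx (f u + 1) (by omega)
    obtain ⟨w, haw, hrw, hdw⟩ := step_down hdy hry
    have hwu : w = u := unique_at_dist hdeg (hep2 _) (f u) w u hrw (hreach u) hdw rfl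
    subst hwu
    refine ⟨y, haw, ?_⟩
    have hcy : G.connectedComponentMk y = G.connectedComponentMk w :=
      ConnectedComponent.sound haw.reachable |>.symm
    show G.dist (ep (G.connectedComponentMk y)) y = G.dist (ep (G.connectedComponentMk w)) w + 1
    rw [hcy]
    exact hdy
  · intro v
    exact dist_lt_card (hreach v)




lemma submatrix_colsel {m : ℕ} (A : Matrix V V F) (e₂ : Fin m → V) :
    A * ((1 : Matrix V V F).submatrix id e₂) = A.submatrix id e₂ := by
  ext u j
  simp only [Matrix.mul_apply, Matrix.submatrix_apply, Matrix.one_apply, id_eq]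
  simp [mul_ite, mul_one, mul_zero]

lemma rank_ge_of_unit_submatrix {m : ℕ} (A : Matrix V V F) (e₁ e₂ : Fin m → V)
    (h : IsUnit (A.submatrix e₁ e₂).det) : m ≤ A.rank := by
  have hq : A.submatrix e₁ e₂ = (A.submatrix id e₂).submatrix e₁ (id : Fin m → Fin m) := by
    ext i j; simp [Matrix.submatrix_apply]
  have hrow : ((A.submatrix id e₂).submatrix e₁ (id : Fin m → Fin m)).mulVecLin
      = (LinearMap.funLeft F F e₁).comp (A.submatrix id e₂).mulVecLin := by
    apply LinearMap.ext; intro x; rfl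
  have h1 : (A.submatrix e₁ e₂).rank = m := by
    have := Matrix.rank_of_isUnit (A.submatrix e₁ e₂) ((Matrix.isUnit_iff_isUnit_det _).mpr h)
    simpa using this
  calc m = (A.submatrix e₁ e₂).rank := h1.symm
    _ ≤ (A.submatrix id e₂).rank := by
        rw [hq, Matrix.rank, hrow, LinearMap.range_comp, Matrix.rank]
        exact Submodule.finrank_map_le _ _
    _ = (A * ((1 : Matrix V V F).submatrix id e₂)).rank := by rw [submatrix_colsel]
    _ ≤ A.rank := Matrix.rank_mul_le_left _ _

lemma rank_add_le' (A B : Matrix V V F) : (A + B).rank ≤ A.rank + B.rank := by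
  classical
  have hrange : LinearMap.range (A + B).mulVecLin ≤
      LinearMap.range A.mulVecLin ⊔ LinearMap.range B.mulVecLin := by
    rintro x ⟨y, rfl⟩
    rw [Matrix.mulVecLin_add]
    exact Submodule.mem_sup.mpr ⟨A.mulVecLin y, ⟨y, rfl⟩, B.mulVecLin y, ⟨y, rfl⟩, rfl⟩
  calc (A + B).rank ≤ Module.finrank F
        ↥(LinearMap.range A.mulVecLin ⊔ LinearMap.range B.mulVecLin) :=
        Submodule.finrank_mono hrange
    _ ≤ A.rank + B.rank := Submodule.finrank_add_le_finrank_add_finrank _ _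

lemma rank_multiset_sum_le (s : Multiset (Matrix V V F)) (h : ∀ B ∈ s, Matrix.rank B ≤ 1) :
    (s.sum).rank ≤ Multiset.card s := by
  induction s using Multiset.induction_on with
  | empty => simp [Matrix.rank_zero]
  | cons a t ih =>
    simp only [Multiset.sum_cons, Multiset.card_cons]
    calc (a + t.sum).rank ≤ a.rank + t.sum.rank := rank_add_le' _ _
      _ ≤ 1 + Multiset.card t := by
          have := h a (Multiset.mem_cons_self a t)
          have := ih (fun B hB => h B (Multiset.mem_cons_of_mem hB))
          omega
      _ = Multiset.card t + 1 := by omega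

lemma rank_ind_le_one (C : Finset V) :
    (Matrix.of fun u v => (if u ∈ C ∧ v ∈ C then (1 : F) else 0)).rank ≤ 1 := by
  classical
  have hv : (Matrix.of fun u v => (if u ∈ C ∧ v ∈ C then (1 : F) else 0)) =
      Matrix.vecMulVec (fun u => if u ∈ C then 1 else 0) (fun v => if v ∈ C then 1 else 0) := by
    ext u v
    by_cases hu : u ∈ C <;> by_cases hv : v ∈ C <;>
      simp [Matrix.vecMulVec_apply, ite_and, hu, hv]
  rw [hv, Matrix.vecMulVec_eq Unit]
  refine le_trans (Matrix.rank_mul_le_right _ _) (le_trans (Matrix.rank_le_card_height _) ?_)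
  simp

lemma multiset_matrix_sum_apply (s : Multiset (Matrix V V F)) (u v : V) :
    s.sum u v = (s.map fun B => B u v).sum := by
  induction s using Multiset.induction_on with
  | empty => simp
  | cons a t ih => simp [ih]

lemma sum_indicator_eq_card (s : Multiset (Finset V)) (u v : V) :
    (s.map fun C => if u ∈ C ∧ v ∈ C then (1 : F) else 0).sum
      = ((Multiset.card (s.filter fun C => u ∈ C ∧ v ∈ C)) : F) := by
  classical
  induction s using Multiset.induction_on with
  | empty => simp
  | cons a t ih =>
    by_cases h : u ∈ a ∧ v ∈ a <;>
      simp [Multiset.filter_cons, h, ih] <;> push_cast <;> ring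

lemma zmod2_cast_eq_one_iff_odd (N : ℕ) : ((N : ZMod 2) = 1) ↔ Odd N := by
  rw [Nat.odd_iff]
  rcases Nat.mod_two_eq_zero_or_one N with h2 | h2 <;>
    rw [← ZMod.natCast_mod N 2, h2] <;> simp [h2] <;> decide

end SCSproof

theorem stmt2 {V : Type*} [Fintype V] [DecidableEq V] (L : SimpleGraph V)
    (hL : IsLinearForest L) (n k : ℕ) (hn : Fintype.card V = n)
    (hk : Nat.card L.ConnectedComponent = k) :
    c2 L = n - k := by
  classical
  obtain ⟨hac, hdeg⟩ := hL
  subst hn; subst hk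
  obtain ⟨f, P1, P2, P3, P4⟩ := SCSproof.exists_pathFun hac hdeg
  set P : V → Prop := fun v => ∃ w, L.Adj v w ∧ f w = f v + 1 with hP
  set R : Finset V := Finset.univ.filter P with hR
  have hmemR : ∀ v, v ∈ R ↔ P v := by intro v; simp [hR]
  set σ : V → V := fun v => if h : P v then h.choose else v with hσdef
  have hσ : ∀ v, P v → L.Adj v (σ v) ∧ f (σ v) = f v + 1 := by
    intro v hv
    simp only [hσdef, dif_pos hv]
    exact hv.choose_spec
  have hσu : ∀ v w, L.Adj v w → f w = f v + 1 → σ v = w := by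
    intro v w ha hw
    have hv : P v := ⟨w, ha, hw⟩
    obtain ⟨h1, h2⟩ := hσ v hv
    refine P1 (σ v) w ?_ (by rw [h2, hw])
    rw [← SimpleGraph.ConnectedComponent.connectedComponentMk_eq_of_adj h1,
      SimpleGraph.ConnectedComponent.connectedComponentMk_eq_of_adj ha]
  -- counting
  set M : Finset V := Finset.univ.filter (fun v => ¬ P v) with hMdef
  have hcards : R.card + M.card = Fintype.card V := by
    rw [hR, hMdef, ← Finset.card_univ]
    exact Finset.card_filter_add_card_filter_not (s := Finset.univ) (p := P)
  have hMk : M.card = Nat.card L.ConnectedComponent := by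
    have hbij : Function.Bijective
        (fun x : {y // y ∈ M} => L.connectedComponentMk x.1) := by
      constructor
      · rintro ⟨x, hx⟩ ⟨y, hy⟩ hxy
        simp only at hxy
        have hPx : ¬ P x := by simpa [hMdef] using hx
        have hPy : ¬ P y := by simpa [hMdef] using hy
        have hxyeq : x = y := by
          rcases lt_trichotomy (f x) (f y) with h | h | h
          · exact absurd (P3 x y hxy.symm h) hPx
          · exact P1 x y hxy h
          · exact absurd (P3 y x hxy h) hPy
        exact Subtype.ext hxyeq
      · intro c
        obtain ⟨v, rfl⟩ := c.exists_rep
        have hVne : (Finset.univ.filter fun x =>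
            L.connectedComponentMk x = L.connectedComponentMk v).Nonempty :=
          ⟨v, Finset.mem_filter.mpr ⟨Finset.mem_univ v, rfl⟩⟩
        obtain ⟨m, hmS, hmax⟩ := Finset.exists_max_image _ f hVne
        simp only [Finset.mem_filter] at hmS
        have hmM : m ∈ M := by
          rw [hMdef, Finset.mem_filter]
          refine ⟨Finset.mem_univ _, ?_⟩
          rintro ⟨w, hw, hfw⟩
          have hwS : L.connectedComponentMk w = L.connectedComponentMk v := by
            rw [← SimpleGraph.ConnectedComponent.connectedComponentMk_eq_of_adj hw, hmS.2]
          have := hmax w (Finset.mem_filter.mpr ⟨Finset.mem_univ w, hwS⟩)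
          omega
        exact ⟨⟨m, hmM⟩, hmS.2⟩
    calc M.card = Nat.card {y // y ∈ M} := (Nat.card_eq_finsetCard M).symm
      _ = Nat.card L.ConnectedComponent := Nat.card_eq_of_bijective _ hbij
  -- upper bound
  have hwit : R.card ∈ {k | ∃ 𝒞 : Multiset (Finset V), IsSCS L 𝒞 ∧ Multiset.card 𝒞 = k} := by
    refine ⟨R.val.map (fun r => ({r, σ r} : Finset V)), ?_, by simp⟩
    intro u v huv
    have hpredeq : ∀ r ∈ R.val, ((fun C => u ∈ C ∧ v ∈ C) ∘ fun r => ({r, σ r} : Finset V)) r ↔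
        ((u = r ∧ v = σ r) ∨ (u = σ r ∧ v = r)) := by
      intro r _
      simp only [Function.comp_apply, Finset.mem_insert, Finset.mem_singleton]
      constructor
      · rintro ⟨hu | hu, hv | hv⟩
        · exact absurd (hu.trans hv.symm) huv
        · exact Or.inl ⟨hu, hv⟩
        · exact Or.inr ⟨hu, hv⟩
        · exact absurd (hu.trans hv.symm) huv
      · rintro (⟨rfl, rfl⟩ | ⟨rfl, rfl⟩) <;> simp
    have hcardf : Multiset.card (((R.val.map fun r => ({r, σ r} : Finset V))).filter
        (fun C => u ∈ C ∧ v ∈ C)) =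
        (R.filter fun r => (u = r ∧ v = σ r) ∨ (u = σ r ∧ v = r)).card := by
      rw [Multiset.filter_map, Multiset.card_map]
      show Multiset.card _ = Multiset.card (R.val.filter _)
      rw [Multiset.filter_congr hpredeq]
    rw [hcardf]
    constructor
    · intro hadj
      rcases P2 u v hadj with hfe | hfe
      · have hσv : σ v = u := hσu v u hadj.symm hfe
        have hvR : v ∈ R := (hmemR v).mpr ⟨u, hadj.symm, hfe⟩
        have heq : (R.filter fun r => (u = r ∧ v = σ r) ∨ (u = σ r ∧ v = r)) = {v} := by
          apply Finset.ext; intro r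
          simp only [Finset.mem_filter, Finset.mem_singleton]
          constructor
          · rintro ⟨hrR, (⟨rfl, hv⟩ | ⟨hu2, rfl⟩)⟩
            · exfalso
              have := (hσ u ((hmemR u).mp hrR)).2
              rw [← hv] at this; omega
            · rfl
          · rintro rfl; exact ⟨hvR, Or.inr ⟨hσv.symm, rfl⟩⟩
        rw [heq]; simp
      · have hσu' : σ u = v := hσu u v hadj hfe
        have huR : u ∈ R := (hmemR u).mpr ⟨v, hadj, hfe⟩
        have heq : (R.filter fun r => (u = r ∧ v = σ r) ∨ (u = σ r ∧ v = r)) = {u} := by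
          apply Finset.ext; intro r
          simp only [Finset.mem_filter, Finset.mem_singleton]
          constructor
          · rintro ⟨hrR, (⟨rfl, hv⟩ | ⟨hu2, rfl⟩)⟩
            · rfl
            · exfalso
              have := (hσ v ((hmemR v).mp hrR)).2
              rw [← hu2] at this; omega
          · rintro rfl; exact ⟨huR, Or.inl ⟨rfl, hσu'.symm⟩⟩
        rw [heq]; simp
    · intro hodd
      by_contra hadj
      have heq : (R.filter fun r => (u = r ∧ v = σ r) ∨ (u = σ r ∧ v = r)) = ∅ := by
        apply Finset.eq_empty_of_forall_notMem
        intro r hr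
        simp only [Finset.mem_filter] at hr
        obtain ⟨hrR, hcase⟩ := hr
        have hadjr := (hσ r ((hmemR r).mp hrR)).1
        rcases hcase with ⟨rfl, rfl⟩ | ⟨rfl, rfl⟩
        · exact hadj hadjr
        · exact hadj hadjr.symm
      rw [heq] at hodd; simp at hodd
  -- lower bound
  have hlb : ∀ m ∈ {k | ∃ 𝒞 : Multiset (Finset V), IsSCS L 𝒞 ∧ Multiset.card 𝒞 = k},
      R.card ≤ m := by
    rintro m ⟨𝒞, hC, rfl⟩
    set A : Matrix V V (ZMod 2) :=
      (𝒞.map (fun C => Matrix.of fun u v => if u ∈ C ∧ v ∈ C then (1 : ZMod 2) else 0)).sum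
      with hA
    have hAentry : ∀ u v, A u v =
        ((Multiset.card (𝒞.filter fun C => u ∈ C ∧ v ∈ C) : ℕ) : ZMod 2) := by
      intro u v
      rw [hA, SCSproof.multiset_matrix_sum_apply, Multiset.map_map]
      have : ((fun B : Matrix V V (ZMod 2) => B u v) ∘
          fun C => Matrix.of fun u v => if u ∈ C ∧ v ∈ C then (1 : ZMod 2) else 0) =
          fun C : Finset V => if u ∈ C ∧ v ∈ C then (1 : ZMod 2) else 0 := rfl
      rw [this, SCSproof.sum_indicator_eq_card]
    have hA1 : ∀ u v, u ≠ v → (A u v = 1 ↔ L.Adj u v) := by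
      intro u v huv
      rw [hAentry, SCSproof.zmod2_cast_eq_one_iff_odd]
      exact (hC u v huv).symm
    have hA0 : ∀ u v, u ≠ v → ¬ L.Adj u v → A u v = 0 := by
      intro u v huv hnadj
      have h1 : A u v ≠ 1 := fun h => hnadj ((hA1 u v huv).mp h)
      have h01 : ∀ x : ZMod 2, x = 0 ∨ x = 1 := by decide
      rcases h01 (A u v) with h | h
      · exact h
      · exact absurd h h1
    have hrank_le : A.rank ≤ Multiset.card 𝒞 := by
      rw [hA]
      refine le_trans (SCSproof.rank_multiset_sum_le _ ?_) (by simp)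
      rintro B hB
      obtain ⟨C, _, rfl⟩ := Multiset.mem_map.mp hB
      exact SCSproof.rank_ind_le_one C
    have hrank_ge : R.card ≤ A.rank := by
      obtain ⟨cidx, hcidx⟩ := Countable.exists_injective_nat L.ConnectedComponent
      set g : V → ℕ := fun v => f v + cidx (L.connectedComponentMk v) * Fintype.card V with hg
      have hginj : Function.Injective g := by
        intro a b hab
        have hposV : 0 < Fintype.card V := Fintype.card_pos_iff.mpr ⟨a⟩
        have hfa := P4 a; have hfb := P4 b
        have hmod : f a = f b := by
          have h2 := congrArg (· % Fintype.card V) hab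
          simpa only [hg, Nat.add_mul_mod_self_right, Nat.mod_eq_of_lt hfa,
            Nat.mod_eq_of_lt hfb] using h2
        have hc2 : cidx (L.connectedComponentMk a) * Fintype.card V =
            cidx (L.connectedComponentMk b) * Fintype.card V := by
          simp only [hg] at hab; omega
        have := Nat.eq_of_mul_eq_mul_right hposV hc2
        exact P1 a b (hcidx this) hmod
      letI : LinearOrder V := LinearOrder.lift' g hginj
      have hltiff : ∀ a b : V, a < b ↔ g a < g b := fun a b => Iff.rfl
      set eqv := R.orderIsoOfFin (rfl : R.card = R.card) with heqv
      set E : Fin R.card → V := fun i => (eqv i : V) with hE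
      have hER : ∀ i, E i ∈ R := fun i => (eqv i).2
      have hEmono : ∀ i j : Fin R.card, i < j → g (E i) < g (E j) := by
        intro i j hij
        have h1 : eqv i < eqv j := eqv.strictMono hij
        exact (hltiff _ _).mp h1
      set B := A.submatrix E (fun j => σ (E j)) with hB
      have hdiag : ∀ i, B i i = 1 := by
        intro i
        obtain ⟨hadj, _⟩ := hσ (E i) ((hmemR _).mp (hER i))
        exact (hA1 _ _ hadj.ne).mpr hadj
      have hupper : ∀ i j, i < j → B i j = 0 := by
        intro i j hij
        obtain ⟨hadj', hf'⟩ := hσ (E j) ((hmemR _).mp (hER j))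
        have hglt := hEmono i j hij
        set r := E i; set r' := E j
        have hcmps : L.connectedComponentMk r' = L.connectedComponentMk (σ r') :=
          SimpleGraph.ConnectedComponent.connectedComponentMk_eq_of_adj hadj'
        by_cases hc : L.connectedComponentMk r = L.connectedComponentMk r'
        · have hflt : f r < f r' := by
            simp only [hg, hc] at hglt; omega
          have hne : r ≠ σ r' := by
            intro h; rw [← h] at hf'; omega
          have hnadj : ¬ L.Adj r (σ r') := by
            intro hadj2
            rcases P2 _ _ hadj2 with h | h <;> omega
          exact hA0 _ _ hne hnadj
        · have hne : r ≠ σ r' := by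
            intro h; rw [← h] at hcmps; exact hc hcmps.symm
          have hnadj : ¬ L.Adj r (σ r') := by
            intro hadj2
            exact hc ((SimpleGraph.ConnectedComponent.connectedComponentMk_eq_of_adj hadj2).trans hcmps.symm)
          exact hA0 _ _ hne hnadj
      have hdet : IsUnit B.det := by
        have htri : B.BlockTriangular OrderDual.toDual := by
          intro i j hij
          exact hupper i j hij
        rw [Matrix.det_of_lowerTriangular B htri]
        rw [Finset.prod_eq_one (fun i _ => hdiag i)]
        exact isUnit_one
      exact SCSproof.rank_ge_of_unit_submatrix A E _ hdet
    exact le_trans hrank_ge hrank_le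
  have hub : c2 L ≤ R.card := Nat.sInf_le hwit
  have hRcard : R.card = Fintype.card V - Nat.card L.ConnectedComponent := by omega
  refine le_antisymm (hRcard ▸ hub) ?_
  rw [c2]
  exact le_csInf ⟨R.card, hwit⟩ (fun b hb => hRcard ▸ hlb b hb)
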